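/- Let k be an odd positive integer, ℓ an even positive integer, a a positive integer, and b_1,…,b_ℓ positive integers with b_j < a for all j and b_1 + b_2 + … + b_ℓ = k·a. Suppose the following identity holds in ℤ[z]: (z^{a} + 1)^k · ∏_{j=1}^ℓ (z^{a − b_j} − 1) = (z^{a·(ℓ−k)} + 1) · ∏_{j=1}^ℓ (z^{b_j} − 1). Then k = 1, ℓ = 2, and a = b_1 + b_2. -/

import Mathlib

open Polynomial Complex

private lemma zeta_pow_ne_one (A : ℕ) (hA : 0 < A) (m : ℕ) (hm : 0 < m) (hm2 : m < 2*A) :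
    Complex.exp (Real.pi * Complex.I / A) ^ m ≠ 1 := by
  rw [← Complex.exp_nat_mul]
  intro h
  rw [Complex.exp_eq_one_iff] at h
  obtain ⟨n, hn⟩ := h
  have hA' : (A:ℂ) ≠ 0 := Nat.cast_ne_zero.mpr hA.ne'
  have hπ : (Real.pi : ℂ) ≠ 0 := by
    exact_mod_cast Real.pi_ne_zero
  field_simp at hn
  -- hn should be like m * (π * I) = n * (2*π*I) * A
  have h2 : (m : ℂ) = 2 * n * A := by
    have hI : (Complex.I) ≠ 0 := Complex.I_ne_zero
    have hπI : (Real.pi : ℂ) * Complex.I ≠ 0 := mul_ne_zero hπ Complex.I_ne_zero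
    have h : (m:ℂ) * ((Real.pi:ℂ)*Complex.I) = (2*n*A) * ((Real.pi:ℂ)*Complex.I) := by
      linear_combination ((Real.pi:ℂ) * Complex.I) * hn
    exact mul_right_cancel₀ hπI h
  have h3 : (m : ℤ) = 2 * n * A := by exact_mod_cast h2
  have hdvd : ((2*A : ℕ):ℤ) ∣ (m:ℤ) := ⟨n, by push_cast; linarith⟩
  have := Int.le_of_dvd (by exact_mod_cast hm) hdvd
  have : (2*A : ℕ) ≤ m := by exact_mod_cast this
  omega

private lemma zeta_pow_self (A : ℕ) (hA : 0 < A) :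
    Complex.exp (Real.pi * Complex.I / A) ^ A = -1 := by
  rw [← Complex.exp_nat_mul]
  have hA' : (A:ℂ) ≠ 0 := Nat.cast_ne_zero.mpr hA.ne'
  rw [show (A:ℂ) * (Real.pi * Complex.I / A) = Real.pi * Complex.I by field_simp]
  exact Complex.exp_pi_mul_I

/-- **Analysis of equation (9).** Let `k` be odd, `ℓ` even, both positive, `a > 0`, and
`b₁, …, b_ℓ` positive integers with `bⱼ < a` and `b₁ + ⋯ + b_ℓ = k·a`. If the identity
`(z^a + 1)^k ∏ⱼ (z^{a−bⱼ} − 1) = (z^{a(ℓ−k)} + 1) ∏ⱼ (z^{bⱼ} − 1)` holds in `ℤ[z]`,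
then `k = 1`, `ℓ = 2` and `a = b₁ + b₂`. -/
theorem stmt8 (k ℓ : ℕ) (hk : 0 < k) (hkodd : Odd k) (hℓ : 0 < ℓ) (hℓeven : Even ℓ)
    (a : ℕ) (ha : 0 < a) (b : Fin ℓ → ℕ)
    (hb : ∀ j, 0 < b j) (hgt : ∀ j, b j < a)
    (hsum : ∑ j, b j = k * a)
    (hid : ((Polynomial.X : Polynomial ℤ) ^ a + 1) ^ k *
          (∏ j, ((Polynomial.X : Polynomial ℤ) ^ (a - b j) - 1)) =
        ((Polynomial.X : Polynomial ℤ) ^ (a * (ℓ - k)) + 1) *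
          (∏ j, ((Polynomial.X : Polynomial ℤ) ^ (b j) - 1))) :
    k = 1 ∧ ℓ = 2 ∧ a = ∑ j, b j := by
  classical
  have : Nonempty (Fin ℓ) := ⟨⟨0, hℓ⟩⟩
  -- Step 0 : k < ℓ
  have hkl : k < ℓ := by
    have hlt : ∑ j, b j < ∑ _j : Fin ℓ, a :=
      Finset.sum_lt_sum_of_nonempty Finset.univ_nonempty (fun j _ => hgt j)
    rw [hsum, Finset.sum_const, Finset.card_univ, Fintype.card_fin, smul_eq_mul] at hlt
    exact lt_of_mul_lt_mul_right hlt (le_of_lt ha)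
  set A := a * (ℓ - k) with hAdef
  have hA : 0 < A := Nat.mul_pos ha (by omega)
  have haA : a ≤ A := Nat.le_mul_of_pos_right a (by omega)
  set ζ : ℂ := Complex.exp (Real.pi * Complex.I / A) with hζdef
  -- Step 1 : evaluate at ζ, primitive 2A-th root of unity, to get ℓ = k + 1
  have h1 := congrArg (Polynomial.aeval ζ : Polynomial ℤ →ₐ[ℤ] ℂ) hid
  simp only [map_mul, map_pow, map_add, map_sub, map_one, map_prod, Polynomial.aeval_X] at h1
  rw [zeta_pow_self A hA, neg_add_cancel, zero_mul] at h1
  have hℓk1 : ℓ = k + 1 := by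
    rcases mul_eq_zero.mp h1 with h | h
    · have h' : ζ ^ a + 1 = 0 := pow_eq_zero_iff hk.ne' |>.mp h
      have h2 : ζ ^ (2 * a) = 1 := by
        have ha' : ζ ^ a = -1 := by linear_combination h'
        rw [two_mul, pow_add, ha']
        ring
      by_contra hne
      have h2a : a * 2 ≤ a * (ℓ - k) := Nat.mul_le_mul_left a (by omega)
      exact zeta_pow_ne_one A hA (2 * a) (by omega) (by simp only [hAdef]; omega) h2
    · obtain ⟨j, _, hj⟩ := Finset.prod_eq_zero_iff.mp h
      have hj' : ζ ^ (a - b j) = 1 := by linear_combination hj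
      have h1j := hgt j
      have h2j : a ≤ A := haA
      exact absurd hj' (zeta_pow_ne_one A hA (a - b j) (by omega) (by omega))
  -- Step 2 : k = 1 by cancelling (X^a + 1) and evaluating at exp(πi/a)
  have e : A = a := by rw [hAdef, show ℓ - k = 1 from by omega, mul_one]
  rw [e] at hid
  have hne : ((Polynomial.X : Polynomial ℤ) ^ a + 1) ≠ 0 := by
    intro h
    have h0 := congrArg (Polynomial.eval 0) h
    simp [zero_pow ha.ne'] at h0
  have hid2 : ((Polynomial.X : Polynomial ℤ) ^ a + 1) ^ (k - 1) *
      (∏ j, ((Polynomial.X : Polynomial ℤ) ^ (a - b j) - 1)) =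
      ∏ j, ((Polynomial.X : Polynomial ℤ) ^ (b j) - 1) := by
    apply mul_left_cancel₀ hne
    calc ((Polynomial.X : Polynomial ℤ) ^ a + 1) *
          (((Polynomial.X : Polynomial ℤ) ^ a + 1) ^ (k - 1) *
            ∏ j, ((Polynomial.X : Polynomial ℤ) ^ (a - b j) - 1))
        = ((Polynomial.X : Polynomial ℤ) ^ a + 1) ^ (k - 1 + 1) *
            ∏ j, ((Polynomial.X : Polynomial ℤ) ^ (a - b j) - 1) := by ring
      _ = ((Polynomial.X : Polynomial ℤ) ^ a + 1) ^ k *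
            ∏ j, ((Polynomial.X : Polynomial ℤ) ^ (a - b j) - 1) := by
            rw [show k - 1 + 1 = k from by omega]
      _ = ((Polynomial.X : Polynomial ℤ) ^ a + 1) *
            ∏ j, ((Polynomial.X : Polynomial ℤ) ^ (b j) - 1) := hid
  have hk1 : k = 1 := by
    by_contra hne1
    set ξ : ℂ := Complex.exp (Real.pi * Complex.I / a) with hξdef
    have h2 := congrArg (Polynomial.aeval ξ : Polynomial ℤ →ₐ[ℤ] ℂ) hid2
    simp only [map_mul, map_pow, map_add, map_sub, map_one, map_prod, Polynomial.aeval_X] at h2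
    rw [zeta_pow_self a ha, neg_add_cancel, zero_pow (by omega : k - 1 ≠ 0), zero_mul] at h2
    obtain ⟨j, _, hj⟩ := Finset.prod_eq_zero_iff.mp h2.symm
    exact absurd (by linear_combination hj : ξ ^ (b j) = 1)
      (zeta_pow_ne_one a ha (b j) (hb j) (by have := hgt j; omega))
  refine ⟨hk1, by omega, ?_⟩
  rw [hsum, hk1, one_mul]
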